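/- For every integer n ≥ 3, with κ_i the number of tuples (x_1,…,x_{n−1}, y_2,…,y_{n−1}) of nonnegative integers satisfying x_1 + (y_2 + ⋯ + y_{n−1}) = n − 2 − i and x_d + (y_d + ⋯ + y_{n−1}) = n − 1 − d for each 2 ≤ d ≤ n−1, the following identity holds: Σ_{i=0}^{n−2} binom(2n−4, i) · κ_i = C_{n−2} · n · 2^{n−3}, where C_{n−2} = binom(2n−4, n−2)/(n−1) is the Catalan number. -/

import Mathlib

namespace Stmt9

def sfx {m : ℕ} (y : Fin m → ℕ) (k : ℕ) : ℕ :=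
  ∑ l : Fin m, if k ≤ (l : ℕ) then y l else 0

def okA (m j : ℕ) (y : Fin m → ℕ) : Prop :=
  (∀ k < m, sfx y k ≤ m - 1 - k) ∧ sfx y 0 ≤ j

instance (m j : ℕ) : DecidablePred (okA m j) := fun y => by
  unfold okA; infer_instance

def Fset (m j : ℕ) : Finset (Fin m → ℕ) :=
  (Fintype.piFinset fun _ => Finset.range m).filter (okA m j)

lemma le_sfx {m : ℕ} (y : Fin m → ℕ) (l : Fin m) : y l ≤ sfx y (l : ℕ) := by
  have := Finset.single_le_sum (f := fun t : Fin m => if (l:ℕ) ≤ (t:ℕ) then y t else 0)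
    (fun t _ => by positivity) (Finset.mem_univ l)
  simpa [sfx] using this

lemma mem_Fset {m j : ℕ} {y : Fin m → ℕ} : y ∈ Fset m j ↔ okA m j y := by
  constructor
  · exact fun h => (Finset.mem_filter.mp h).2
  · intro h
    refine Finset.mem_filter.mpr ⟨Fintype.mem_piFinset.mpr fun l => ?_, h⟩
    have h1 := le_sfx y l
    have h2 := h.1 (l : ℕ) l.isLt
    have := l.isLt
    simp only [Finset.mem_range]
    omega

lemma sfx_cons {m : ℕ} (a : ℕ) (y : Fin m → ℕ) (k : ℕ) :
    sfx (Fin.cons a y) (k + 1) = sfx y k := by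
  unfold sfx
  rw [Fin.sum_univ_succ]
  simp [Fin.cons]

lemma sfx_cons_zero {m : ℕ} (a : ℕ) (y : Fin m → ℕ) :
    sfx (Fin.cons a y) 0 = a + sfx y 0 := by
  unfold sfx
  rw [Fin.sum_univ_succ]
  simp [Fin.cons]

lemma sfx_tail {m : ℕ} (y : Fin (m+1) → ℕ) (k : ℕ) :
    sfx (Fin.tail y) k = sfx y (k + 1) := by
  conv_rhs => rw [← Fin.cons_self_tail y]
  rw [sfx_cons]

lemma sfx_zero_succ {m : ℕ} (y : Fin (m+1) → ℕ) :
    sfx y 0 = y 0 + sfx y 1 := by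
  conv_lhs => rw [← Fin.cons_self_tail y, sfx_cons_zero]
  rw [sfx_tail]


def f : ℕ → ℕ → ℕ
  | 0, _ => 1
  | (m+1), j => ∑ a ∈ Finset.range (min j m + 1), f m (min j m - a)

lemma card_Fset (m j : ℕ) : (Fset m j).card = f m j := by
  induction m generalizing j with
  | zero =>
    rw [show f 0 j = 1 from rfl]
    have : Fset 0 j = {(fun l => Fin.elim0 l)} := by
      ext y
      simp only [Finset.mem_singleton]
      constructor
      · intro _; funext l; exact l.elim0
      · rintro rfl
        exact mem_Fset.mpr ⟨fun k hk => by omega, by simp [sfx]⟩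
    rw [this]; rfl
  | succ m ih =>
    have hJ1 : min j m ≤ j := min_le_left _ _
    have hJ2 : min j m ≤ m := min_le_right _ _
    have hJ3 : min j m = j ∨ min j m = m := min_choice j m
    set J := min j m with hJ
    rw [show f (m+1) j = ∑ a ∈ Finset.range (J + 1), f m (J - a) from rfl]
    rw [Finset.card_eq_sum_card_fiberwise (f := fun y => y 0)
      (t := Finset.range (J + 1)) ?_]
    · refine Finset.sum_congr rfl fun a _ha => ?_
      rw [← ih (J - a)]
      refine Finset.card_bij' (fun y _ => Fin.tail y) (fun y' _ => Fin.cons a y') ?hi ?hj ?li ?ri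
      case hi =>
        intro y hy
        show Fin.tail y ∈ Fset m (J - a)
        rw [Finset.mem_filter] at hy
        obtain ⟨hy, hy0⟩ := hy
        obtain ⟨h1, h2⟩ := mem_Fset.mp hy
        refine mem_Fset.mpr ⟨fun k hk => ?_, ?_⟩
        · rw [sfx_tail]
          have := h1 (k+1) (by omega)
          omega
        · have h5 : sfx (Fin.tail y) 0 = sfx y 1 := sfx_tail y 0
          have h3 := sfx_zero_succ y
          have h4 := h1 0 (by omega)
          omega
      case hj =>
        intro y' hy'
        show Fin.cons (α := fun _ => ℕ) a y' ∈ Finset.filter (fun z => z 0 = a) (Fset (m+1) j)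
        obtain ⟨h1, h2⟩ := mem_Fset.mp hy'
        have ha' : a ≤ J := by
          have := Finset.mem_range.mp _ha
          omega
        refine Finset.mem_filter.mpr ⟨mem_Fset.mpr ⟨fun k hk => ?_, ?_⟩, by simp⟩
        · match k, hk with
          | 0, _ =>
            rw [sfx_cons_zero]
            omega
          | (k+1), hk =>
            rw [sfx_cons]
            have := h1 k (by omega)
            omega
        · rw [sfx_cons_zero]
          omega
      case li =>
        intro y hy
        rw [Finset.mem_filter] at hy
        show Fin.cons a (Fin.tail y) = y
        rw [← hy.2, Fin.cons_self_tail]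
      case ri =>
        intro y' _
        show Fin.tail (Fin.cons (α := fun _ => ℕ) a y') = y'
        exact Fin.tail_cons (α := fun _ => ℕ) a y'
    · intro y hy
      obtain ⟨h1, h2⟩ := mem_Fset.mp hy
      have h3 := le_sfx y 0
      have h4 := h1 0 (by omega)
      simp only [Finset.mem_coe, Finset.mem_range, Nat.lt_succ_iff]
      simp only [Fin.val_zero] at h3
      omega


lemma f_zero : ∀ m, f m 0 = 1
  | 0 => rfl
  | (m+1) => by
    show (∑ a ∈ Finset.range (min 0 m + 1), f m (min 0 m - a)) = 1
    simp [f_zero m]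

lemma f_formula : ∀ m j u, j + u = m → (m + 1) * f m j = (u + 1) * Nat.choose (m + j) j := by
  intro m
  induction m with
  | zero =>
    intro j u h
    obtain ⟨rfl, rfl⟩ : j = 0 ∧ u = 0 := by omega
    rfl
  | succ m ih =>
    have hsum : ∀ j, f (m+1) j = ∑ b ∈ Finset.range (min j m + 1), f m b := by
      intro j
      show (∑ a ∈ Finset.range (min j m + 1), f m (min j m - a)) = _
      rw [show (∑ a ∈ Finset.range (min j m + 1), f m (min j m - a))
          = ∑ a ∈ Finset.range (min j m + 1), f m (min j m + 1 - 1 - a) from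
        Finset.sum_congr rfl fun a ha => by rw [show min j m + 1 - 1 - a = min j m - a from by omega]]
      exact Finset.sum_range_reflect (fun b => f m b) (min j m + 1)
    have key : ∀ J u, J + u = m →
        (m + 2) * ((m + 1) * ∑ b ∈ Finset.range (J + 1), f m b) =
          (m + 1) * ((u + 2) * Nat.choose (m + 1 + J) J) := by
      intro J
      induction J with
      | zero =>
        intro u hu
        have h1 : ∑ b ∈ Finset.range 1, f m b = 1 := by simp [f_zero]
        have h2 : u = m := by omega
        subst h2
        rw [h1, Nat.choose_zero_right]
        ring
      | succ J ihJ =>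
        intro u hu
        rw [Finset.sum_range_succ, Nat.mul_add, Nat.mul_add, ihJ (u+1) (by omega)]
        have hf := ih (J+1) u (by omega)
        rw [show m + (J+1) = m + 1 + J by omega] at hf
        have key2 : Nat.choose (m + 1 + J) (J+1) * (J+1) = Nat.choose (m + 1 + J) J * (m+1) := by
          have h := Nat.choose_succ_right_eq (m + 1 + J) J
          rw [h, show m + 1 + J - J = m + 1 by omega]
        have pascal : Nat.choose (m + 1 + (J+1)) (J + 1)
            = Nat.choose (m + 1 + J) J + Nat.choose (m + 1 + J) (J + 1) := by
          rw [show m + 1 + (J+1) = (m + 1 + J) + 1 by omega]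
          exact Nat.choose_succ_succ' (m + 1 + J) J
        rw [pascal, hf]
        have hm : (m : ℤ) = J + 1 + u := by push_cast [← hu]; ring
        zify at key2 ⊢
        linear_combination (-1 : ℤ) * key2 - ((Nat.choose (m + 1 + J) (J+1) : ℤ)) * hm
    intro j u h
    apply Nat.eq_of_mul_eq_mul_left (show 0 < m + 1 by omega)
    calc (m+1) * ((m + 1 + 1) * f (m+1) j)
        = (m+2) * ((m+1) * ∑ b ∈ Finset.range (min j m + 1), f m b) := by rw [hsum j]; ring
      _ = (m+1) * ((m - min j m + 2) * Nat.choose (m + 1 + min j m) (min j m)) :=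
          key _ _ (by omega)
      _ = (m+1) * ((u+1) * Nat.choose (m + 1 + j) j) := by
          rcases Nat.lt_or_ge j (m+1) with hj | hj
          · have hmin : min j m = j := min_eq_left (by omega)
            rw [hmin]
            congr 2
            omega
          · have hj' : j = m + 1 := by omega
            subst hj'
            have hmin : min (m+1) m = m := min_eq_right (by omega)
            rw [hmin]
            have h1 : Nat.choose (m+1+(m+1)) (m+1)
                = Nat.choose (m+1+m) m + Nat.choose (m+1+m) (m+1) := by
              rw [show m+1+(m+1) = (m+1+m)+1 by omega]
              exact Nat.choose_succ_succ' _ _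
            have h2 : Nat.choose (m+1+m) (m+1) = Nat.choose (m+1+m) m := by
              have h3 := Nat.choose_symm (show m ≤ m+1+m by omega)
              rw [show m+1+m-m = m+1 from by omega] at h3
              exact h3
            have hu : u = 0 := by omega
            subst hu
            rw [h1, h2, Nat.sub_self]
            ring

lemma sfx_zero_total {m : ℕ} (y : Fin m → ℕ) : sfx y 0 = ∑ l, y l := by simp [sfx]

lemma filter_sum (m : ℕ) (y : Fin m → ℕ) (d : ℕ) (hd : 2 ≤ d) :
    ∑ j ∈ Finset.univ.filter (fun j : Fin m => d ≤ (j : ℕ) + 2), y j = sfx y (d - 2) := by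
  rw [Finset.sum_filter]
  exact Finset.sum_congr rfl fun l _ => if_congr (by omega) rfl rfl

lemma card_kappa (m i : ℕ) (hm : 1 ≤ m) (hi : i ≤ m) :
    Nat.card {p : (Fin (m + 1) → ℕ) × (Fin m → ℕ) //
      (p.1 ⟨0, by omega⟩ + ∑ j, p.2 j = m - i) ∧
      (∀ d : ℕ, ∀ _h1 : 2 ≤ d, ∀ _h2 : d ≤ m + 1,
        p.1 ⟨d - 1, by omega⟩ +
          ∑ j ∈ Finset.univ.filter (fun j : Fin m => d ≤ (j : ℕ) + 2), p.2 j
        = m + 1 - d)} = f m (m - i) := by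
  rw [← card_Fset m (m - i), ← Nat.card_eq_finsetCard]
  have hF : ∀ p : (Fin (m + 1) → ℕ) × (Fin m → ℕ),
      ((p.1 ⟨0, by omega⟩ + ∑ j, p.2 j = m - i) ∧
      (∀ d : ℕ, ∀ _h1 : 2 ≤ d, ∀ _h2 : d ≤ m + 1,
        p.1 ⟨d - 1, by omega⟩ +
          ∑ j ∈ Finset.univ.filter (fun j : Fin m => d ≤ (j : ℕ) + 2), p.2 j
        = m + 1 - d)) → p.2 ∈ Fset m (m - i) := by
    rintro p ⟨h1, h2⟩
    refine mem_Fset.mpr ⟨fun k hk => ?_, ?_⟩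
    · have h3 := h2 (k + 2) (by omega) (by omega)
      rw [filter_sum m p.2 (k + 2) (by omega)] at h3
      have : k + 2 - 2 = k := by omega
      rw [this] at h3
      omega
    · rw [sfx_zero_total]
      omega
  refine Nat.card_eq_of_bijective (fun p => ⟨p.val.2, hF p.val p.prop⟩) ⟨?_, ?_⟩
  · -- injective
    rintro ⟨⟨x, y⟩, hp⟩ ⟨⟨x', y'⟩, hq⟩ h
    have hyy : y = y' := congrArg Subtype.val h
    subst hyy
    refine Subtype.ext (Prod.ext ?_ rfl)
    funext t
    rcases t with ⟨tv, ht⟩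
    match tv, ht with
    | 0, ht =>
      have e1 : x ⟨0, ht⟩ + ∑ j, y j = m - i := hp.1
      have e2 : x' ⟨0, ht⟩ + ∑ j, y j = m - i := hq.1
      show x ⟨0, ht⟩ = x' ⟨0, ht⟩
      omega
    | (k+1), ht =>
      have e1 : x ⟨k + 1, ht⟩ +
          ∑ j ∈ Finset.univ.filter (fun j : Fin m => k + 2 ≤ (j : ℕ) + 2), y j
          = m + 1 - (k + 2) := hp.2 (k + 2) (by omega) (by omega)
      have e2 : x' ⟨k + 1, ht⟩ +
          ∑ j ∈ Finset.univ.filter (fun j : Fin m => k + 2 ≤ (j : ℕ) + 2), y j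
          = m + 1 - (k + 2) := hq.2 (k + 2) (by omega) (by omega)
      show x ⟨k + 1, ht⟩ = x' ⟨k + 1, ht⟩
      omega
  · -- surjective
    rintro ⟨y, hy⟩
    obtain ⟨h1, h2⟩ := mem_Fset.mp hy
    rw [sfx_zero_total] at h2
    refine ⟨⟨⟨fun t => if (t : ℕ) = 0 then (m - i) - ∑ l, y l
        else (m - (t : ℕ)) - sfx y ((t : ℕ) - 1), y⟩, ?_, ?_⟩, rfl⟩
    · simp only [Fin.val_mk]
      rw [if_true]
      omega
    · intro d hd1 hd2
      simp only [Fin.val_mk]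
      rw [if_neg (by omega), filter_sum m y d hd1]
      have h3 := h1 (d - 2) (by omega)
      have h4 : d - 1 - 1 = d - 2 := by omega
      rw [h4]
      omega


lemma sum_aux (M : ℕ) :
    ∑ i ∈ Finset.range (M + 2), (i + 1) * Nat.choose (M + 1) i = (M + 3) * 2 ^ M := by
  have h1 : ∑ i ∈ Finset.range (M + 2), (i + 1) * Nat.choose (M + 1) i
      = (∑ i ∈ Finset.range (M + 2), i * Nat.choose (M + 1) i)
        + ∑ i ∈ Finset.range (M + 2), Nat.choose (M + 1) i := by
    rw [← Finset.sum_add_distrib]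
    exact Finset.sum_congr rfl fun i _ => by ring
  have h2 : ∑ i ∈ Finset.range (M + 2), i * Nat.choose (M + 1) i = (M + 1) * 2 ^ M := by
    rw [Finset.sum_range_succ' (fun i => i * Nat.choose (M + 1) i) (M + 1)]
    simp only [Nat.zero_mul, Nat.add_zero]
    have : ∀ i, (i + 1) * Nat.choose (M + 1) (i + 1) = (M + 1) * Nat.choose M i := by
      intro i
      rw [Nat.mul_comm]
      exact (Nat.add_one_mul_choose_eq M i).symm
    rw [Finset.sum_congr rfl fun i _ => this i, ← Finset.mul_sum, Nat.sum_range_choose]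
  rw [h1, h2, Nat.sum_range_choose]
  ring


end Stmt9

theorem stmt9 (n : ℕ) (hn : 3 ≤ n) (κ : ℕ → ℕ)
    (hκ : ∀ i, κ i = Nat.card {p : (Fin (n - 1) → ℕ) × (Fin (n - 2) → ℕ) //
      (p.1 ⟨0, by omega⟩ + ∑ j, p.2 j = n - 2 - i) ∧
      (∀ d : ℕ, ∀ _h1 : 2 ≤ d, ∀ _h2 : d ≤ n - 1,
        p.1 ⟨d - 1, by omega⟩ +
          ∑ j ∈ Finset.univ.filter (fun j : Fin (n - 2) => d ≤ (j : ℕ) + 2), p.2 j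
        = n - 1 - d)}) :
    ∑ i ∈ Finset.range (n - 1), Nat.choose (2 * n - 4) i * κ i =
      catalan (n - 2) * n * 2 ^ (n - 3) := by
  obtain ⟨m, rfl⟩ : ∃ m, n = m + 2 := ⟨n - 2, by omega⟩
  have hm : 1 ≤ m := by omega
  have hκ' : ∀ i, i ≤ m → κ i = Stmt9.f m (m - i) := by
    intro i hi
    rw [hκ i]
    exact Stmt9.card_kappa m i hm hi
  -- clean up the indices
  have e1 : m + 2 - 1 = m + 1 := by omega
  have e2 : m + 2 - 2 = m := by omega
  have e3 : 2 * (m + 2) - 4 = 2 * m := by omega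
  have e4 : m + 2 - 3 = m - 1 := by omega
  rw [e1, e2, e3, e4]
  apply Nat.eq_of_mul_eq_mul_left (show 0 < m + 1 by omega)
  rw [Finset.mul_sum]
  have step : ∀ i ∈ Finset.range (m + 1),
      (m + 1) * (Nat.choose (2 * m) i * κ i)
        = Nat.choose (2 * m) m * ((i + 1) * Nat.choose m i) := by
    intro i hi
    have hi' : i ≤ m := by
      have := Finset.mem_range.mp hi; omega
    rw [hκ' i hi']
    have hf := Stmt9.f_formula m (m - i) i (by omega)
    calc (m + 1) * (Nat.choose (2 * m) i * Stmt9.f m (m - i))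
        = Nat.choose (2 * m) i * ((m + 1) * Stmt9.f m (m - i)) := by ring
      _ = Nat.choose (2 * m) i * ((i + 1) * Nat.choose (m + (m - i)) (m - i)) := by rw [hf]
      _ = (i + 1) * (Nat.choose (2 * m) i * Nat.choose (2 * m - i) (m - i)) := by
          rw [show m + (m - i) = 2 * m - i by omega]; ring
      _ = (i + 1) * (Nat.choose (2 * m) m * Nat.choose m i) := by
          rw [← Nat.choose_mul (show i ≤ m from hi')]
      _ = Nat.choose (2 * m) m * ((i + 1) * Nat.choose m i) := by ring
  rw [Finset.sum_congr rfl step, ← Finset.mul_sum]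
  obtain ⟨M, rfl⟩ : ∃ M, m = M + 1 := ⟨m - 1, by omega⟩
  rw [Stmt9.sum_aux M]
  have hcat : (M + 2) * catalan (M + 1) = Nat.choose (2 * (M + 1)) (M + 1) := by
    have := succ_mul_catalan_eq_centralBinom (M + 1)
    rw [Nat.centralBinom] at this
    exact this
  have e5 : M + 1 - 1 = M := by omega
  rw [e5]
  calc Nat.choose (2 * (M + 1)) (M + 1) * ((M + 3) * 2 ^ M)
      = ((M + 2) * catalan (M + 1)) * ((M + 3) * 2 ^ M) := by rw [hcat]
    _ = (M + 1 + 1) * (catalan (M + 1) * (M + 1 + 2) * 2 ^ M) := by ring
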